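/- Let q ≥ 1, α > 0, and for each r = 1, 2 let n^{(r)} = (n^{(r)}_1, ..., n^{(r)}_q) be non-negative integer count vectors with totals n^{(r)} > 0. Let n = n^{(1)} + n^{(2)} componentwise. Then the local local BDeu score of the merged counts satisfies llB(n, α) ≤ llB(n^{(1)}, α) + ML(n^{(2)}), where llB(m, α) = -log pGam(α, ∑_k m_k) + ∑_k log pGam(α/q, m_k) and ML(m) = ∑_k m_k log(m_k / ∑_l m_l). -/

import Mathlib

/-- `pGam α x = Γ(x+α)/Γ(α)`. -/
noncomputable def pGam (α : ℝ) (x : ℕ) : ℝ := Real.Gamma (x + α) / Real.Gamma α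

/-- Local local BDeu score of a count vector `m` (over `q` categories). -/
noncomputable def llB (q : ℕ) (α : ℝ) (m : ℕ → ℕ) : ℝ :=
  -Real.log (pGam α (∑ k ∈ Finset.range q, m k)) +
    ∑ k ∈ Finset.range q, Real.log (pGam (α / q) (m k))

/-- Maximized multinomial log-likelihood (with `0 · log 0 = 0`). -/
noncomputable def ML (q : ℕ) (m : ℕ → ℕ) : ℝ :=
  ∑ k ∈ Finset.range q,
    (m k : ℝ) * Real.log ((m k : ℝ) / ((∑ l ∈ Finset.range q, m l : ℕ) : ℝ))


open MeasureTheory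

noncomputable def rB (a b : ℝ) : ℝ := ∫ t in Set.Ioo (0:ℝ) 1, t ^ (a-1) * (1-t) ^ (b-1)

lemma cf_eq {a b : ℝ} {x : ℝ} (h0 : 0 ≤ x) (h1 : x ≤ 1) :
    (x:ℂ) ^ ((a:ℂ)-1) * (1-(x:ℂ)) ^ ((b:ℂ)-1) = ((x ^ (a-1) * (1-x) ^ (b-1) : ℝ) : ℂ) := by
  rw [Complex.ofReal_mul, Complex.ofReal_cpow h0, Complex.ofReal_cpow (by linarith : (0:ℝ) ≤ 1 - x)]
  push_cast
  ring

lemma rB_intble {a b : ℝ} (ha : 0 < a) (hb : 0 < b) :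
    IntegrableOn (fun t : ℝ => t ^ (a-1) * (1-t) ^ (b-1)) (Set.Ioo 0 1) := by
  have h := Complex.betaIntegral_convergent (u := (a:ℂ)) (v := (b:ℂ)) (by simpa) (by simpa)
  rw [intervalIntegrable_iff_integrableOn_Ioc_of_le zero_le_one] at h
  have h2 : IntegrableOn (fun x : ℝ => Complex.re ((x:ℂ) ^ ((a:ℂ)-1) * (1-(x:ℂ)) ^ ((b:ℂ)-1)))
      (Set.Ioo 0 1) := (h.mono_set Set.Ioo_subset_Ioc_self).re
  refine h2.congr_fun (fun x hx => ?_) measurableSet_Ioo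
  dsimp only
  rw [cf_eq hx.1.le hx.2.le, Complex.ofReal_re]

lemma Gamma_mul_Gamma_rB {a b : ℝ} (ha : 0 < a) (hb : 0 < b) :
    Real.Gamma a * Real.Gamma b = Real.Gamma (a+b) * rB a b := by
  have key := Complex.Gamma_mul_Gamma_eq_betaIntegral (s := (a:ℂ)) (t := (b:ℂ)) (by simpa) (by simpa)
  have hbeta : Complex.betaIntegral a b = ((rB a b : ℝ) : ℂ) := by
    rw [Complex.betaIntegral, intervalIntegral.integral_of_le zero_le_one,
      integral_Ioc_eq_integral_Ioo, rB]
    exact (setIntegral_congr_fun measurableSet_Ioo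
      (fun x hx => cf_eq hx.1.le hx.2.le)).trans integral_ofReal
  rw [hbeta, Complex.Gamma_ofReal, Complex.Gamma_ofReal, ← Complex.ofReal_add,
    Complex.Gamma_ofReal, ← Complex.ofReal_mul, ← Complex.ofReal_mul, Complex.ofReal_inj] at key
  exact key

lemma rB_pos {a b : ℝ} (ha : 0 < a) (hb : 0 < b) : 0 < rB a b := by
  have h := Gamma_mul_Gamma_rB ha hb
  have h1 := Real.Gamma_pos_of_pos ha
  have h2 := Real.Gamma_pos_of_pos hb
  have h3 := Real.Gamma_pos_of_pos (by linarith : 0 < a + b)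
  nlinarith [mul_pos h1 h2]

lemma pGam_pos {α : ℝ} (hα : 0 < α) (x : ℕ) : 0 < pGam α x :=
  div_pos (Real.Gamma_pos_of_pos (by positivity)) (Real.Gamma_pos_of_pos hα)

lemma pt_bound (n m : ℕ) {t : ℝ} (h0 : 0 ≤ t) (h1 : t ≤ 1) :
    t ^ n * (1-t) ^ m * ((n:ℝ) + m) ^ (n + m) ≤ (n:ℝ) ^ n * (m:ℝ) ^ m := by
  rcases Nat.eq_zero_or_pos n with hn | hn
  · subst hn
    have h5 : (1-t) ^ m ≤ 1 := pow_le_one₀ (by linarith) (by linarith)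
    have h6 : (0:ℝ) ≤ ((m:ℝ)) ^ m := by positivity
    simp only [pow_zero, one_mul, Nat.cast_zero, zero_add]
    nlinarith
  rcases Nat.eq_zero_or_pos m with hm | hm
  · subst hm
    have h5 : t ^ n ≤ 1 := pow_le_one₀ h0 h1
    have h6 : (0:ℝ) ≤ ((n:ℝ)) ^ n := by positivity
    simp only [pow_zero, mul_one, Nat.cast_zero, add_zero]
    nlinarith
  have hN : (0:ℝ) < (n:ℝ) + m := by positivity
  have hn' : (0:ℝ) < n := by exact_mod_cast hn
  have hm' : (0:ℝ) < m := by exact_mod_cast hm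
  set p₁ : ℝ := t * ((n:ℝ)+m) / n with hp₁
  set p₂ : ℝ := (1-t) * ((n:ℝ)+m) / m with hp₂
  have hp₁0 : 0 ≤ p₁ := div_nonneg (mul_nonneg h0 hN.le) hn'.le
  have hp₂0 : 0 ≤ p₂ := div_nonneg (mul_nonneg (by linarith) hN.le) hm'.le
  have hkey : p₁ ^ ((n:ℝ)/((n:ℝ)+m)) * p₂ ^ ((m:ℝ)/((n:ℝ)+m)) ≤ 1 := by
    have hgm := Real.geom_mean_le_arith_mean2_weighted
      (by positivity : (0:ℝ) ≤ (n:ℝ)/((n:ℝ)+m)) (by positivity : (0:ℝ) ≤ (m:ℝ)/((n:ℝ)+m))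
      hp₁0 hp₂0 (by field_simp)
    calc p₁ ^ ((n:ℝ)/((n:ℝ)+m)) * p₂ ^ ((m:ℝ)/((n:ℝ)+m))
        ≤ (n:ℝ)/((n:ℝ)+m) * p₁ + (m:ℝ)/((n:ℝ)+m) * p₂ := hgm
      _ = 1 := by rw [hp₁, hp₂]; field_simp; ring
  have hpow : p₁ ^ n * p₂ ^ m ≤ 1 := by
    have h2 : (p₁ ^ ((n:ℝ)/((n:ℝ)+m))) ^ ((n:ℝ)+m) * (p₂ ^ ((m:ℝ)/((n:ℝ)+m))) ^ ((n:ℝ)+m) ≤ 1 := by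
      rw [← Real.mul_rpow (Real.rpow_nonneg hp₁0 _) (Real.rpow_nonneg hp₂0 _)]
      calc (p₁ ^ ((n:ℝ)/((n:ℝ)+m)) * p₂ ^ ((m:ℝ)/((n:ℝ)+m))) ^ ((n:ℝ)+m)
          ≤ 1 ^ ((n:ℝ)+m) := Real.rpow_le_rpow
            (mul_nonneg (Real.rpow_nonneg hp₁0 _) (Real.rpow_nonneg hp₂0 _)) hkey hN.le
        _ = 1 := Real.one_rpow _
    rw [← Real.rpow_mul hp₁0, ← Real.rpow_mul hp₂0,
      div_mul_cancel₀ _ hN.ne', div_mul_cancel₀ _ hN.ne'] at h2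
    rw [← Real.rpow_natCast p₁ n, ← Real.rpow_natCast p₂ m]
    exact h2
  have hexp : p₁ ^ n * p₂ ^ m * ((n:ℝ) ^ n * (m:ℝ) ^ m)
      = t ^ n * (1-t) ^ m * ((n:ℝ)+m) ^ (n+m) := by
    rw [hp₁, hp₂, div_pow, div_pow, mul_pow, mul_pow, pow_add]
    field_simp
  have hfin := mul_le_mul_of_nonneg_right hpow
    (by positivity : (0:ℝ) ≤ (n:ℝ) ^ n * (m:ℝ) ^ m)
  rw [one_mul] at hfin
  linarith [hexp]

lemma lemA {a b : ℝ} (ha : 0 < a) (hb : 0 < b) (n m : ℕ) :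
    pGam a n * pGam b m * (((n+m:ℕ)):ℝ) ^ (n+m) ≤ pGam (a+b) (n+m) * (n:ℝ) ^ n * (m:ℝ) ^ m := by
  have hna : (0:ℝ) < (n:ℝ) + a := by positivity
  have hmb : (0:ℝ) < (m:ℝ) + b := by positivity
  have hint : rB ((n:ℝ)+a) ((m:ℝ)+b) * (((n:ℝ)) + m) ^ (n+m) ≤ (n:ℝ) ^ n * (m:ℝ) ^ m * rB a b := by
    rw [rB, rB, ← integral_mul_const, ← integral_const_mul]
    refine setIntegral_mono_on ((rB_intble hna hmb).mul_const _)
      ((rB_intble ha hb).const_mul _) measurableSet_Ioo (fun x hx => ?_)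
    have hx0 := hx.1
    have hx1 := hx.2
    have e1 : x ^ ((n:ℝ)+a-1) = x ^ n * x ^ (a-1) := by
      rw [← Real.rpow_natCast x n, ← Real.rpow_add hx0]; ring_nf
    have e2 : (1-x) ^ ((m:ℝ)+b-1) = (1-x) ^ m * (1-x) ^ (b-1) := by
      rw [← Real.rpow_natCast (1-x) m, ← Real.rpow_add (by linarith)]; ring_nf
    rw [e1, e2]
    have hg : (0:ℝ) ≤ x ^ (a-1) * (1-x) ^ (b-1) :=
      mul_nonneg (Real.rpow_nonneg hx0.le _) (Real.rpow_nonneg (by linarith) _)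
    calc x ^ n * x ^ (a-1) * ((1-x) ^ m * (1-x) ^ (b-1)) * ((n:ℝ)+m) ^ (n+m)
        = (x ^ n * (1-x) ^ m * ((n:ℝ)+m) ^ (n+m)) * (x ^ (a-1) * (1-x) ^ (b-1)) := by ring
      _ ≤ ((n:ℝ) ^ n * (m:ℝ) ^ m) * (x ^ (a-1) * (1-x) ^ (b-1)) :=
          mul_le_mul_of_nonneg_right (pt_bound n m hx0.le (by linarith)) hg
      _ = (n:ℝ) ^ n * (m:ℝ) ^ m * (x ^ (a-1) * (1-x) ^ (b-1)) := by ring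
  have hGa := Real.Gamma_pos_of_pos ha
  have hGb := Real.Gamma_pos_of_pos hb
  have hGab := Real.Gamma_pos_of_pos (by linarith : (0:ℝ) < a + b)
  have hB0 := rB_pos ha hb
  have h1 : Real.Gamma ((n:ℝ)+a) * Real.Gamma ((m:ℝ)+b)
      = Real.Gamma (((n:ℝ)+a)+((m:ℝ)+b)) * rB ((n:ℝ)+a) ((m:ℝ)+b) := Gamma_mul_Gamma_rB hna hmb
  have h2 : Real.Gamma a * Real.Gamma b = Real.Gamma (a+b) * rB a b := Gamma_mul_Gamma_rB ha hb
  have hGs := Real.Gamma_pos_of_pos (by linarith : (0:ℝ) < ((n:ℝ)+a)+((m:ℝ)+b))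
  have hcast : ((n+m:ℕ):ℝ) + (a+b) = ((n:ℝ)+a)+((m:ℝ)+b) := by push_cast; ring
  have hcast2 : (((n+m:ℕ)):ℝ) = (n:ℝ) + m := by push_cast; ring
  unfold pGam
  rw [hcast, hcast2, div_mul_div_comm, h1, h2, div_mul_eq_mul_div,
    div_le_iff₀ (by positivity)]
  have hre : Real.Gamma (((n:ℝ)+a)+((m:ℝ)+b)) / Real.Gamma (a+b) * (n:ℝ) ^ n * (m:ℝ) ^ m
      * (Real.Gamma (a+b) * rB a b)
      = Real.Gamma (((n:ℝ)+a)+((m:ℝ)+b)) * ((n:ℝ) ^ n * (m:ℝ) ^ m * rB a b) := by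
    field_simp
  rw [hre]
  calc Real.Gamma (((n:ℝ)+a)+((m:ℝ)+b)) * rB ((n:ℝ)+a) ((m:ℝ)+b) * ((n:ℝ)+m) ^ (n+m)
      = Real.Gamma (((n:ℝ)+a)+((m:ℝ)+b)) * (rB ((n:ℝ)+a) ((m:ℝ)+b) * ((n:ℝ)+m) ^ (n+m)) := by
        ring
    _ ≤ Real.Gamma (((n:ℝ)+a)+((m:ℝ)+b)) * ((n:ℝ) ^ n * (m:ℝ) ^ m * rB a b) :=
        mul_le_mul_of_nonneg_left hint hGs.le
lemma pGam_add {α : ℝ} (hα : 0 < α) (x y : ℕ) :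
    pGam α (x + y) = pGam α x * pGam ((x:ℝ) + α) y := by
  have hx : Real.Gamma ((x:ℝ) + α) ≠ 0 := (Real.Gamma_pos_of_pos (by positivity)).ne'
  have hα' : Real.Gamma α ≠ 0 := (Real.Gamma_pos_of_pos hα).ne'
  unfold pGam
  have harg : ((x + y : ℕ):ℝ) + α = (y:ℝ) + ((x:ℝ) + α) := by push_cast; ring
  rw [harg, div_mul_div_comm, mul_comm (Real.Gamma ((x:ℝ)+α)) (Real.Gamma ((y:ℝ)+((x:ℝ)+α))),
    mul_div_mul_right _ _ hx]

lemma lemB (q : ℕ) (hq : 1 ≤ q) (a : ℕ → ℝ) (n : ℕ → ℕ)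
    (ha : ∀ k ∈ Finset.range q, 0 < a k) :
    (∏ k ∈ Finset.range q, pGam (a k) (n k))
      * (((∑ k ∈ Finset.range q, n k : ℕ)):ℝ) ^ (∑ k ∈ Finset.range q, n k)
    ≤ pGam (∑ k ∈ Finset.range q, a k) (∑ k ∈ Finset.range q, n k)
      * ∏ k ∈ Finset.range q, ((n k : ℝ)) ^ (n k) := by
  induction q, hq using Nat.le_induction with
  | base => simp
  | succ q hq ih =>
    have haq : ∀ k ∈ Finset.range q, 0 < a k :=
      fun k hk => ha k (Finset.mem_range.2 (lt_trans (Finset.mem_range.1 hk) (by omega)))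
    have hAq : 0 < ∑ k ∈ Finset.range q, a k :=
      Finset.sum_pos haq (Finset.nonempty_range_iff.2 (by omega))
    have haqq : 0 < a q := ha q (Finset.mem_range.2 (by omega))
    set N : ℕ := ∑ k ∈ Finset.range q, n k with hN
    set A : ℝ := ∑ k ∈ Finset.range q, a k with hA
    have hNpow : (0:ℝ) < ((N:ℕ):ℝ) ^ N := by
      rcases Nat.eq_zero_or_pos N with h | h
      · rw [h]; norm_num
      · have : (0:ℝ) < (N:ℝ) := by exact_mod_cast h
        positivity
    have key := lemA hAq haqq N (n q)
    have ihq := ih haq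
    have hprodnn : (0:ℝ) ≤ ∏ k ∈ Finset.range q, ((n k:ℝ)) ^ (n k) :=
      Finset.prod_nonneg fun k _ => by positivity
    have hmulnn : (0:ℝ) ≤ pGam (a q) (n q) * (((N + n q : ℕ)):ℝ) ^ (N + n q) :=
      mul_nonneg (pGam_pos haqq _).le (by positivity)
    rw [Finset.sum_range_succ, Finset.sum_range_succ, Finset.prod_range_succ,
      Finset.prod_range_succ, ← hN, ← hA]
    rw [← mul_le_mul_iff_of_pos_right hNpow]
    calc ((∏ k ∈ Finset.range q, pGam (a k) (n k)) * pGam (a q) (n q)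
          * (((N + n q : ℕ)):ℝ) ^ (N + n q)) * (((N:ℕ):ℝ) ^ N)
        = ((∏ k ∈ Finset.range q, pGam (a k) (n k)) * (((N:ℕ):ℝ) ^ N))
          * (pGam (a q) (n q) * (((N + n q : ℕ)):ℝ) ^ (N + n q)) := by ring
      _ ≤ (pGam A N * ∏ k ∈ Finset.range q, ((n k:ℝ)) ^ (n k))
          * (pGam (a q) (n q) * (((N + n q : ℕ)):ℝ) ^ (N + n q)) :=
          mul_le_mul_of_nonneg_right ihq hmulnn
      _ = (pGam A N * pGam (a q) (n q) * (((N + n q : ℕ)):ℝ) ^ (N + n q))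
          * (∏ k ∈ Finset.range q, ((n k:ℝ)) ^ (n k)) := by ring
      _ ≤ (pGam (A + a q) (N + n q) * ((N:ℕ):ℝ) ^ N * ((n q : ℝ)) ^ (n q))
          * (∏ k ∈ Finset.range q, ((n k:ℝ)) ^ (n k)) :=
          mul_le_mul_of_nonneg_right key hprodnn
      _ = pGam (A + a q) (N + n q)
          * ((∏ k ∈ Finset.range q, ((n k:ℝ)) ^ (n k)) * ((n q : ℝ)) ^ (n q))
          * (((N:ℕ):ℝ) ^ N) := by ring
theorem stmt_12 (q : ℕ) (hq : 1 ≤ q) (α : ℝ) (hα : 0 < α) (n₁ n₂ : ℕ → ℕ)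
    (h1 : 0 < ∑ k ∈ Finset.range q, n₁ k) (h2 : 0 < ∑ k ∈ Finset.range q, n₂ k) :
    llB q α (fun k => n₁ k + n₂ k) ≤ llB q α n₁ + ML q n₂ := by
  have hq0 : (0:ℝ) < q := by exact_mod_cast hq
  have hβ : 0 < α / q := div_pos hα hq0
  set β : ℝ := α / q with hβdef
  set N₁ : ℕ := ∑ k ∈ Finset.range q, n₁ k with hN₁
  set N₂ : ℕ := ∑ k ∈ Finset.range q, n₂ k with hN₂
  have hN₂pos : (0:ℝ) < (N₂:ℝ) := by exact_mod_cast h2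
  have hsum : ∑ k ∈ Finset.range q, ((n₁ k : ℝ) + β) = (N₁:ℝ) + α := by
    rw [Finset.sum_add_distrib, Finset.sum_const, Finset.card_range, hN₁, nsmul_eq_mul, hβdef]
    push_cast
    field_simp
  have hB := lemB q hq (fun k => (n₁ k : ℝ) + β) n₂ (fun k _ => by positivity)
  rw [hsum, ← hN₂] at hB
  have hpGpos : ∀ k ∈ Finset.range q, 0 < pGam ((n₁ k:ℝ) + β) (n₂ k) :=
    fun k _ => pGam_pos (by positivity) _
  have hpk : ∀ k : ℕ, (0:ℝ) < ((n₂ k:ℝ)) ^ (n₂ k) := fun k => by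
    rcases Nat.eq_zero_or_pos (n₂ k) with h | h
    · rw [h]; norm_num
    · exact pow_pos (by exact_mod_cast h) _
  have hlhs_pos : 0 < (∏ k ∈ Finset.range q, pGam ((n₁ k:ℝ)+β) (n₂ k)) * ((N₂:ℕ):ℝ) ^ N₂ :=
    mul_pos (Finset.prod_pos hpGpos) (pow_pos hN₂pos _)
  have hlog := Real.log_le_log hlhs_pos hB
  rw [Real.log_mul (Finset.prod_pos hpGpos).ne' (pow_pos hN₂pos _).ne',
    Real.log_prod (fun k hk => (hpGpos k hk).ne'), Real.log_pow,
    Real.log_mul (pGam_pos (by positivity) N₂).ne'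
      (Finset.prod_pos (fun k _ => hpk k)).ne',
    Real.log_prod (fun k _ => (hpk k).ne')] at hlog
  simp only [Real.log_pow] at hlog
  -- hlog : ∑ log pGam (↑n₁k+β) (n₂ k) + ↑N₂ * log ↑N₂ ≤ log pGam (↑N₁+α) N₂ + ∑ ↑n₂k * log ↑n₂k
  have hML : ML q n₂ = (∑ k ∈ Finset.range q, (n₂ k:ℝ) * Real.log (n₂ k))
      - (N₂:ℝ) * Real.log N₂ := by
    simp only [ML, ← hN₂]
    calc ∑ k ∈ Finset.range q, (n₂ k:ℝ) * Real.log ((n₂ k:ℝ) / (N₂:ℝ))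
        = ∑ k ∈ Finset.range q, ((n₂ k:ℝ) * Real.log (n₂ k) - (n₂ k:ℝ) * Real.log N₂) := by
          refine Finset.sum_congr rfl fun k _ => ?_
          rcases Nat.eq_zero_or_pos (n₂ k) with h | h
          · rw [h]; norm_num
          · rw [Real.log_div (by exact_mod_cast h.ne') hN₂pos.ne']; ring
      _ = (∑ k ∈ Finset.range q, (n₂ k:ℝ) * Real.log (n₂ k)) - (N₂:ℝ) * Real.log N₂ := by
          rw [Finset.sum_sub_distrib, ← Finset.sum_mul]
          congr 2
          rw [hN₂]
          push_cast
          rfl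
  have hsum12 : ∑ k ∈ Finset.range q, (n₁ k + n₂ k) = N₁ + N₂ := by
    rw [Finset.sum_add_distrib, hN₁, hN₂]
  have hE1 : llB q α (fun k => n₁ k + n₂ k)
      = -Real.log (pGam α N₁) - Real.log (pGam ((N₁:ℝ)+α) N₂)
        + (∑ k ∈ Finset.range q, Real.log (pGam β (n₁ k)))
        + (∑ k ∈ Finset.range q, Real.log (pGam ((n₁ k:ℝ)+β) (n₂ k))) := by
    simp only [llB, ← hβdef]
    rw [hsum12, pGam_add hα N₁ N₂,
      Real.log_mul (pGam_pos hα N₁).ne' (pGam_pos (by positivity) N₂).ne']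
    have : ∑ k ∈ Finset.range q, Real.log (pGam β (n₁ k + n₂ k))
        = ∑ k ∈ Finset.range q,
          (Real.log (pGam β (n₁ k)) + Real.log (pGam ((n₁ k:ℝ)+β) (n₂ k))) := by
      refine Finset.sum_congr rfl fun k _ => ?_
      rw [pGam_add hβ, Real.log_mul (pGam_pos hβ _).ne' (pGam_pos (by positivity) _).ne']
    rw [this, Finset.sum_add_distrib]
    ring
  have hE2 : llB q α n₁ = -Real.log (pGam α N₁)
      + ∑ k ∈ Finset.range q, Real.log (pGam β (n₁ k)) := by
    simp only [llB, ← hβdef, ← hN₁]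
  rw [hE1, hE2, hML]
  linarith [hlog]
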